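/- Let Q be a finite quiver without sinks over a field k and L = L(Q) the Leavitt path algebra. For each vertex i ∈ Q₀ and each m ≥ 0, set X_{i,m} = span_k{γ*η : γ, η paths in Q with t(γ) = t(η), s(γ) = s(η) = i, and η of length m}. Then: (1) the set {γ*η : t(γ) = t(η), s(γ) = i = s(η), length(η) = m} is k-linearly independent in L; (2) X_{i,m} ⊆ X_{i,m+1} for all m (via the second Cuntz–Krieger relations γ*η = Σ_{α∈Q₁, s(α)=t(η)} (αγ)*(αη)), and e_i L e_i = ∪_{m≥0} X_{i,m}. -/

import Mathlib

noncomputable section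
open scoped Classical

/-- The Koszul sign `(-1)^e`, for an integer exponent `e`. -/
def ksign (e : ℤ) : ℤ := if Even e then 1 else -1

/-- A `ℤ`-graded vector space over `k`. -/
structure GradedSpace (k : Type) [Field k] : Type 1 where
  carrier : Type
  [acg : AddCommGroup carrier]
  [mod : Module k carrier]
  grading : ℤ → Submodule k carrier

attribute [instance] GradedSpace.acg GradedSpace.mod

/-! ## Quivers, Leavitt path algebras and radical square zero algebras -/

section Quivers

/-- a finite quiver `Q = (Q₀, Q₁; s, t)` -/
structure QuiverData : Type 1 where
  V : Type
  A : Type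
  [fintypeV : Fintype V]
  [fintypeA : Fintype A]
  [decV : DecidableEq V]
  [decA : DecidableEq A]
  src : A → V
  tgt : A → V

attribute [instance] QuiverData.fintypeV QuiverData.fintypeA QuiverData.decV QuiverData.decA

/-- `Q` has no sinks: every vertex is the source of some arrow. -/
def QuiverData.NoSinks (Q : QuiverData) : Prop := ∀ v : Q.V, ∃ a : Q.A, Q.src a = v

/-- generators of the Leavitt path algebra: vertices, arrows and ghost arrows -/
inductive LGen (Q : QuiverData) : Type
  | vertex : Q.V → LGen Q
  | arrow : Q.A → LGen Q
  | ghost : Q.A → LGen Q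

variable (k : Type) [Field k] (Q : QuiverData)

open FreeAlgebra

/-- The defining relations of the Leavitt path algebra `L(Q)`: the path algebra relations
of the double quiver `Q̄` together with the first and second Cuntz–Krieger relations. -/
inductive LeavittRel : FreeAlgebra k (LGen Q) → FreeAlgebra k (LGen Q) → Prop
  | vertex_mul (i j : Q.V) :
      LeavittRel (ι k (LGen.vertex i) * ι k (LGen.vertex j))
        (if i = j then ι k (LGen.vertex i) else 0)
  | sum_vertices : LeavittRel (∑ i : Q.V, ι k (LGen.vertex i)) 1
  | arrow_tgt (a : Q.A) :
      LeavittRel (ι k (LGen.vertex (Q.tgt a)) * ι k (LGen.arrow a)) (ι k (LGen.arrow a))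
  | arrow_src (a : Q.A) :
      LeavittRel (ι k (LGen.arrow a) * ι k (LGen.vertex (Q.src a))) (ι k (LGen.arrow a))
  | ghost_src (a : Q.A) :
      LeavittRel (ι k (LGen.vertex (Q.src a)) * ι k (LGen.ghost a)) (ι k (LGen.ghost a))
  | ghost_tgt (a : Q.A) :
      LeavittRel (ι k (LGen.ghost a) * ι k (LGen.vertex (Q.tgt a))) (ι k (LGen.ghost a))
  | ck1 (a b : Q.A) (h : Q.src a = Q.src b) :
      LeavittRel (ι k (LGen.arrow a) * ι k (LGen.ghost b))
        (if a = b then ι k (LGen.vertex (Q.tgt a)) else 0)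
  | ck2 (v : Q.V) :
      LeavittRel (∑ a ∈ Finset.univ.filter (fun a => Q.src a = v),
          ι k (LGen.ghost a) * ι k (LGen.arrow a))
        (ι k (LGen.vertex v))

/-- the Leavitt path algebra `L = L(Q)` over `k` -/
abbrev LeavittAlg := RingQuot (LeavittRel k Q)

/-- the canonical algebra map from the free algebra onto `L(Q)` -/
abbrev leavittMk : FreeAlgebra k (LGen Q) →ₐ[k] LeavittAlg k Q :=
  RingQuot.mkAlgHom k (LeavittRel k Q)

/-- the image of a generator in `L(Q)` -/
def lgen (g : LGen Q) : LeavittAlg k Q := leavittMk k Q (ι k g)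

/-- the idempotent `e_i ∈ L(Q)` attached to a vertex -/
def lvert (i : Q.V) : LeavittAlg k Q := lgen k Q (LGen.vertex i)

/-- the degree of a generator: `|e_i| = 0`, `|α| = 1`, `|α*| = -1` -/
def lgenDeg : LGen Q → ℤ
  | LGen.vertex _ => 0
  | LGen.arrow _ => 1
  | LGen.ghost _ => -1

/-- The canonical `ℤ`-grading of the Leavitt path algebra: the degree-`n` component is
spanned by the monomials in the generators of total degree `n`. -/
def leavittGrading (n : ℤ) : Submodule k (LeavittAlg k Q) :=
  Submodule.span k {x | ∃ w : List (LGen Q),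
    (w.map (lgenDeg Q)).sum = n ∧ x = (w.map (lgen k Q)).prod}

/-- The Leavitt path algebra `L(Q)` as a graded space (it is viewed as a dg algebra with
zero differential). -/
def LeavittSpace : GradedSpace k where
  carrier := LeavittAlg k Q
  grading := leavittGrading k Q

/-- generators of the path algebra `kQ` -/
inductive PGen (Q : QuiverData) : Type
  | vertex : Q.V → PGen Q
  | arrow : Q.A → PGen Q

/-- the defining relations of the radical square zero algebra `kQ/J²` -/
inductive RadSqRel : FreeAlgebra k (PGen Q) → FreeAlgebra k (PGen Q) → Prop
  | vertex_mul (i j : Q.V) :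
      RadSqRel (ι k (PGen.vertex i) * ι k (PGen.vertex j))
        (if i = j then ι k (PGen.vertex i) else 0)
  | sum_vertices : RadSqRel (∑ i : Q.V, ι k (PGen.vertex i)) 1
  | arrow_tgt (a : Q.A) :
      RadSqRel (ι k (PGen.vertex (Q.tgt a)) * ι k (PGen.arrow a)) (ι k (PGen.arrow a))
  | arrow_src (a : Q.A) :
      RadSqRel (ι k (PGen.arrow a) * ι k (PGen.vertex (Q.src a))) (ι k (PGen.arrow a))
  | arrow_orth (a : Q.A) (j : Q.V) (h : j ≠ Q.tgt a) :
      RadSqRel (ι k (PGen.vertex j) * ι k (PGen.arrow a)) 0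
  | arrow_orth' (a : Q.A) (j : Q.V) (h : j ≠ Q.src a) :
      RadSqRel (ι k (PGen.arrow a) * ι k (PGen.vertex j)) 0
  | rad_sq (a b : Q.A) : RadSqRel (ι k (PGen.arrow a) * ι k (PGen.arrow b)) 0

/-- the radical square zero algebra `Λ = kQ/J²` -/
abbrev RadSqAlg := RingQuot (RadSqRel k Q)

end Quivers

section Paths

/-- `PathOk Q s t l`: the list of arrows `l = [α_n, …, α_1]` is a path from `s` to `t`
(composable arrows read from right to left). -/
def PathOk (Q : QuiverData) (s t : Q.V) : List Q.A → Prop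
  | [] => s = t
  | a :: l => Q.tgt a = t ∧ PathOk Q s (Q.src a) l

/-- a path `p = α_n ⋯ α_2 α_1` in the quiver `Q`, stored as the list `[α_n, …, α_1]` -/
structure QPath (Q : QuiverData) : Type where
  source : Q.V
  target : Q.V
  arrows : List Q.A
  ok : PathOk Q source target arrows

variable (k : Type) [Field k] (Q : QuiverData)

/-- the element `p = α_n ⋯ α_1 ∈ L(Q)` attached to a path -/
def pathElem (p : QPath Q) : LeavittAlg k Q :=
  (p.arrows.map (fun a => lgen k Q (LGen.arrow a))).prod * lvert k Q p.source

/-- the element `p* = α_1* α_2* ⋯ α_n* ∈ L(Q)` attached to a path -/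
def ghostElem (p : QPath Q) : LeavittAlg k Q :=
  lvert k Q p.source * (p.arrows.reverse.map (fun a => lgen k Q (LGen.ghost a))).prod

/-- extend a path by an arrow starting at its target -/
def QPath.cons (p : QPath Q) (a : Q.A) (h : Q.src a = p.target) : QPath Q :=
  ⟨p.source, Q.tgt a, a :: p.arrows, ⟨rfl, by rw [h]; exact p.ok⟩⟩

/-- the corner projection `x ↦ e_i x e_i` of `L(Q)` -/
def cornerMap (i : Q.V) : LeavittAlg k Q →ₗ[k] LeavittAlg k Q :=
  (LinearMap.mulLeft k (lvert k Q i)).comp (LinearMap.mulRight k (lvert k Q i))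

/-- pairs `(γ, η)` of paths with `t(γ) = t(η)`, `s(γ) = s(η) = i` and `η` of length `m` -/
def GEPairs (i : Q.V) (m : ℕ) : Type :=
  {pq : QPath Q × QPath Q //
    pq.1.target = pq.2.target ∧ pq.1.source = i ∧ pq.2.source = i ∧
      pq.2.arrows.length = m}

/-- the subspace `X_{i,m} = span_k {γ*η : t(γ) = t(η), s(γ) = s(η) = i, ℓ(η) = m}` -/
def Xim (i : Q.V) (m : ℕ) : Submodule k (LeavittAlg k Q) :=
  Submodule.span k
    (Set.range fun pq : GEPairs Q i m => ghostElem k Q pq.1.1 * pathElem k Q pq.1.2)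

end Paths

section Aux1
variable (k : Type) [Field k] (Q : QuiverData)

/-- abbreviation for the arrow generator -/
def AR (a : Q.A) : LeavittAlg k Q := lgen k Q (LGen.arrow a)

/-- abbreviation for the ghost generator -/
def GH (a : Q.A) : LeavittAlg k Q := lgen k Q (LGen.ghost a)

lemma vert_mul (i j : Q.V) :
    lvert k Q i * lvert k Q j = if i = j then lvert k Q i else 0 := by
  have h := RingQuot.mkAlgHom_rel k (LeavittRel.vertex_mul (k := k) (Q := Q) i j)
  rw [map_mul] at h
  split_ifs at h ⊢ with hij
  · exact h
  · rw [map_zero] at h; exact h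

lemma sum_vert : ∑ i : Q.V, lvert k Q i = 1 := by
  have h := RingQuot.mkAlgHom_rel k (LeavittRel.sum_vertices (k := k) (Q := Q))
  rw [map_sum, map_one] at h
  exact h

lemma tgt_arrow (a : Q.A) : lvert k Q (Q.tgt a) * AR k Q a = AR k Q a := by
  have h := RingQuot.mkAlgHom_rel k (LeavittRel.arrow_tgt (k := k) (Q := Q) a)
  rw [map_mul] at h; exact h

lemma arrow_src (a : Q.A) : AR k Q a * lvert k Q (Q.src a) = AR k Q a := by
  have h := RingQuot.mkAlgHom_rel k (LeavittRel.arrow_src (k := k) (Q := Q) a)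
  rw [map_mul] at h; exact h

lemma src_ghost (a : Q.A) : lvert k Q (Q.src a) * GH k Q a = GH k Q a := by
  have h := RingQuot.mkAlgHom_rel k (LeavittRel.ghost_src (k := k) (Q := Q) a)
  rw [map_mul] at h; exact h

lemma ghost_tgt (a : Q.A) : GH k Q a * lvert k Q (Q.tgt a) = GH k Q a := by
  have h := RingQuot.mkAlgHom_rel k (LeavittRel.ghost_tgt (k := k) (Q := Q) a)
  rw [map_mul] at h; exact h

lemma ck2' (v : Q.V) :
    ∑ a ∈ Finset.univ.filter (fun a => Q.src a = v), GH k Q a * AR k Q a = lvert k Q v := by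
  have h := RingQuot.mkAlgHom_rel k (LeavittRel.ck2 (k := k) (Q := Q) v)
  rw [map_sum] at h
  simp only [map_mul] at h
  exact h

lemma arrow_vert (a : Q.A) (j : Q.V) :
    AR k Q a * lvert k Q j = if Q.src a = j then AR k Q a else 0 := by
  conv_lhs => rw [← arrow_src k Q a, mul_assoc, vert_mul]
  split_ifs with h
  · rw [arrow_src]
  · rw [mul_zero]

lemma vert_arrow (j : Q.V) (a : Q.A) :
    lvert k Q j * AR k Q a = if j = Q.tgt a then AR k Q a else 0 := by
  conv_lhs => rw [← tgt_arrow k Q a, ← mul_assoc, vert_mul]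
  split_ifs with h
  · rw [h, tgt_arrow]
  · rw [zero_mul]

lemma vert_ghost (j : Q.V) (a : Q.A) :
    lvert k Q j * GH k Q a = if j = Q.src a then GH k Q a else 0 := by
  conv_lhs => rw [← src_ghost k Q a, ← mul_assoc, vert_mul]
  split_ifs with h
  · rw [h, src_ghost]
  · rw [zero_mul]

lemma ghost_vert (a : Q.A) (j : Q.V) :
    GH k Q a * lvert k Q j = if Q.tgt a = j then GH k Q a else 0 := by
  conv_lhs => rw [← ghost_tgt k Q a, mul_assoc, vert_mul]
  split_ifs with h
  · rw [ghost_tgt]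
  · rw [mul_zero]

lemma arrow_ghost (a b : Q.A) :
    AR k Q a * GH k Q b = if a = b then lvert k Q (Q.tgt a) else 0 := by
  by_cases hs : Q.src a = Q.src b
  · have h := RingQuot.mkAlgHom_rel k (LeavittRel.ck1 (k := k) (Q := Q) a b hs)
    rw [map_mul] at h
    split_ifs at h ⊢ with hab
    · exact h
    · rw [map_zero] at h; exact h
  · have hab : a ≠ b := fun h => hs (by rw [h])
    rw [if_neg hab, ← arrow_src k Q a, mul_assoc, vert_ghost, if_neg hs, mul_zero]

end Aux1

section Aux2
variable (k : Type) [Field k] (Q : QuiverData)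

/-- path element from a list and a source vertex -/
def pe (l : List Q.A) (s : Q.V) : LeavittAlg k Q :=
  (l.map (AR k Q)).prod * lvert k Q s

/-- ghost element from a list and a source vertex -/
def ge (l : List Q.A) (s : Q.V) : LeavittAlg k Q :=
  lvert k Q s * (l.reverse.map (GH k Q)).prod

lemma pathElem_eq (p : QPath Q) : pathElem k Q p = pe k Q p.arrows p.source := rfl

lemma ghostElem_eq (p : QPath Q) : ghostElem k Q p = ge k Q p.arrows p.source := rfl

@[simp] lemma pe_nil (s : Q.V) : pe k Q [] s = lvert k Q s := by
  simp [pe]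

@[simp] lemma ge_nil (s : Q.V) : ge k Q [] s = lvert k Q s := by
  simp [ge]

lemma pe_cons (a : Q.A) (l : List Q.A) (s : Q.V) :
    pe k Q (a :: l) s = AR k Q a * pe k Q l s := by
  simp [pe, mul_assoc]

lemma ge_cons (a : Q.A) (l : List Q.A) (s : Q.V) :
    ge k Q (a :: l) s = ge k Q l s * GH k Q a := by
  simp [ge, mul_assoc]

lemma vert_pe {l : List Q.A} {s t : Q.V} (hl : PathOk Q s t l) :
    lvert k Q t * pe k Q l s = pe k Q l s := by
  induction l generalizing t with
  | nil => obtain rfl : s = t := hl; rw [pe_nil, vert_mul, if_pos rfl]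
  | cons a l ih =>
      obtain ⟨rfl, h2⟩ := hl
      rw [pe_cons, ← mul_assoc, tgt_arrow]

lemma ge_vert {l : List Q.A} {s t : Q.V} (hl : PathOk Q s t l) :
    ge k Q l s * lvert k Q t = ge k Q l s := by
  induction l generalizing t with
  | nil => obtain rfl : s = t := hl; rw [ge_nil, vert_mul, if_pos rfl]
  | cons a l ih =>
      obtain ⟨rfl, h2⟩ := hl
      rw [ge_cons, mul_assoc, ghost_tgt]

lemma pe_vert (l : List Q.A) (s j : Q.V) :
    pe k Q l s * lvert k Q j = if s = j then pe k Q l s else 0 := by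
  rw [pe, mul_assoc, vert_mul]
  split_ifs with h
  · rfl
  · rw [mul_zero]

lemma vert_ge (j : Q.V) (l : List Q.A) (s : Q.V) :
    lvert k Q j * ge k Q l s = if j = s then ge k Q l s else 0 := by
  rw [ge, ← mul_assoc, vert_mul]
  split_ifs with h
  · subst h; rfl
  · rw [zero_mul]

lemma pathok_tgt_unique {l : List Q.A} {s t t' : Q.V}
    (h : PathOk Q s t l) (h' : PathOk Q s t' l) : t = t' := by
  cases l with
  | nil => exact h.symm.trans h'
  | cons a l => exact h.1.symm.trans h'.1

lemma pathok_concat {l : List Q.A} {b : Q.A} {s t : Q.V} :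
    PathOk Q s t (l ++ [b]) ↔ s = Q.src b ∧ PathOk Q (Q.tgt b) t l := by
  induction l generalizing t with
  | nil =>
      constructor
      · rintro ⟨h1, h2⟩; exact ⟨h2, h1⟩
      · rintro ⟨h1, h2⟩; exact ⟨h2, h1⟩
  | cons a l ih =>
      constructor
      · rintro ⟨h1, h2⟩
        obtain ⟨h3, h4⟩ := ih.mp h2
        exact ⟨h3, h1, h4⟩
      · rintro ⟨h1, h2, h3⟩
        exact ⟨h2, ih.mpr ⟨h1, h3⟩⟩

lemma ge_concat (l : List Q.A) (b : Q.A) :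
    ge k Q (l ++ [b]) (Q.src b) = GH k Q b * ge k Q l (Q.tgt b) := by
  rw [ge, ge, List.reverse_append]
  simp only [List.reverse_cons, List.reverse_nil, List.nil_append, List.map_cons,
    List.prod_cons, List.singleton_append]
  rw [← mul_assoc, src_ghost, ← mul_assoc, ghost_tgt]

lemma gh_mul_ge (a : Q.A) (l : List Q.A) (s : Q.V) :
    GH k Q a * ge k Q l s =
      if s = Q.tgt a then ge k Q (l ++ [a]) (Q.src a) else 0 := by
  by_cases h : s = Q.tgt a
  · subst h; rw [if_pos rfl, ge_concat]
  · rw [if_neg h, ge, ← mul_assoc, ghost_vert, if_neg (fun hh => h hh.symm), zero_mul]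

lemma ar_mul_ge_concat (a b : Q.A) (l : List Q.A) :
    AR k Q a * ge k Q (l ++ [b]) (Q.src b) =
      if a = b then ge k Q l (Q.tgt b) else 0 := by
  rw [ge_concat, ← mul_assoc, arrow_ghost]
  split_ifs with h
  · subst h; rw [vert_ge, if_pos rfl]
  · rw [zero_mul]

end Aux2

section Aux3
variable (k : Type) [Field k] (Q : QuiverData)

/-- an infinite chain of composable arrows, as a function -/
def ChainF (f : ℕ → Q.A) : Prop := ∀ n, Q.src (f (n + 1)) = Q.tgt (f n)

/-- infinite paths in `Q` -/
def InfP : Type := {f : ℕ → Q.A // ChainF Q f}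

/-- prepend an arrow to an infinite sequence -/
def consF (a : Q.A) (f : ℕ → Q.A) : ℕ → Q.A := fun n => Nat.casesOn n a f

/-- drop the first `m` arrows of an infinite sequence -/
def dropF (m : ℕ) (f : ℕ → Q.A) : ℕ → Q.A := fun n => f (n + m)

/-- prepend a path (in application order) to an infinite sequence -/
def prependF : List Q.A → (ℕ → Q.A) → (ℕ → Q.A)
  | [], f => f
  | a :: l, f => prependF l (consF Q a f)

@[simp] lemma consF_zero (a : Q.A) (f : ℕ → Q.A) : consF Q a f 0 = a := rfl

@[simp] lemma consF_succ (a : Q.A) (f : ℕ → Q.A) (n : ℕ) : consF Q a f (n + 1) = f n := rfl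

lemma chain_consF {a : Q.A} {f : ℕ → Q.A} (hf : ChainF Q f)
    (ha : Q.src (f 0) = Q.tgt a) : ChainF Q (consF Q a f) := by
  intro n
  cases n with
  | zero => exact ha
  | succ n => exact hf n

lemma chain_dropF (m : ℕ) {f : ℕ → Q.A} (hf : ChainF Q f) : ChainF Q (dropF Q m f) := by
  intro n
  have := hf (n + m)
  simpa [dropF, Nat.add_right_comm] using this

lemma chain_prependF : ∀ (l : List Q.A) {f : ℕ → Q.A} {s t : Q.V}, ChainF Q f →
    PathOk Q s t l → Q.src (f 0) = t → ChainF Q (prependF Q l f)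
  | [], f, s, t, hf, _, _ => hf
  | a :: l, f, s, t, hf, hl, hft =>
      chain_prependF l (chain_consF Q hf (hft.trans hl.1.symm)) hl.2 rfl

lemma prependF_start : ∀ (l : List Q.A) {f : ℕ → Q.A} {s t : Q.V},
    PathOk Q s t l → Q.src (f 0) = t → Q.src (prependF Q l f 0) = s
  | [], f, s, t, hl, hft => by simpa [prependF, hft] using hl.symm
  | a :: l, f, s, t, hl, hft => prependF_start l hl.2 rfl

lemma prependF_add : ∀ (l : List Q.A) (f : ℕ → Q.A) (j : ℕ),
    prependF Q l f (l.length + j) = f j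
  | [], f, j => by simp [prependF]
  | a :: l, f, j => by
      have h1 : (a :: l).length + j = l.length + (j + 1) := by
        simp [List.length_cons]; omega
      rw [prependF, h1, prependF_add l (consF Q a f) (j + 1), consF_succ]

lemma dropF_prependF (l : List Q.A) (f : ℕ → Q.A) :
    dropF Q l.length (prependF Q l f) = f := by
  funext j
  rw [dropF, Nat.add_comm, prependF_add]

/-- `MatchesP l f`: the infinite sequence `f` begins with the path `l`
(in application order). -/
def MatchesP : List Q.A → (ℕ → Q.A) → Prop
  | [], _ => True
  | a :: l, f => MatchesP l f ∧ f l.length = a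

lemma matchesP_prependF : ∀ (l : List Q.A) (f : ℕ → Q.A), MatchesP Q l (prependF Q l f)
  | [], _ => trivial
  | a :: l, f => by
    refine ⟨matchesP_prependF l (consF Q a f), ?_⟩
    have := prependF_add Q l (consF Q a f) 0
    simpa [prependF] using this

lemma matchesP_unique : ∀ (l l' : List Q.A) (f : ℕ → Q.A), MatchesP Q l f →
    MatchesP Q l' f → l.length = l'.length → l = l'
  | [], [], _, _, _, _ => rfl
  | [], _ :: _, _, _, _, h => by simp at h
  | _ :: _, [], _, _, _, h => by simp at h
  | a :: l, a' :: l', f, hm, hm', h => by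
      have hlen : l.length = l'.length := by simpa using h
      obtain rfl := matchesP_unique l l' f hm.1 hm'.1 hlen
      have : a = a' := by rw [← hm.2, hm'.2]
      rw [this]

/-- the module `M` on which `L(Q)` acts: free on `InfP × ℤ` -/
abbrev MM : Type := (InfP Q × ℤ) →₀ k

/-- shift of an infinite path -/
def shiftP (x : InfP Q) : InfP Q := ⟨dropF Q 1 x.1, chain_dropF Q 1 x.2⟩

/-- drop of an infinite path -/
def dropP (m : ℕ) (x : InfP Q) : InfP Q := ⟨dropF Q m x.1, chain_dropF Q m x.2⟩

/-- prepend a path to an infinite path (junk value if not composable) -/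
def prependP (l : List Q.A) (x : InfP Q) : InfP Q :=
  if h : ∃ s t : Q.V, PathOk Q s t l ∧ Q.src (x.1 0) = t then
    ⟨prependF Q l x.1, by
      obtain ⟨s, t, hl, hx⟩ := h
      exact chain_prependF Q l x.2 hl hx⟩
  else x

lemma prependP_val {l : List Q.A} {x : InfP Q} {s t : Q.V}
    (hl : PathOk Q s t l) (hx : Q.src (x.1 0) = t) :
    (prependP Q l x).1 = prependF Q l x.1 := by
  have e : prependP Q l x = ⟨prependF Q l x.1, chain_prependF Q l x.2 hl hx⟩ :=
    dif_pos ⟨s, t, hl, hx⟩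
  rw [e]

/-- the action of a generator of `L(Q)` on the basis of `M` -/
def genAct : LGen Q → (InfP Q × ℤ) → MM k Q
  | LGen.vertex v, p => if Q.src (p.1.1 0) = v then Finsupp.single p 1 else 0
  | LGen.arrow a, p =>
      if p.1.1 0 = a then Finsupp.single (shiftP Q p.1, p.2 + 1) 1 else 0
  | LGen.ghost a, p =>
      if h : Q.src (p.1.1 0) = Q.tgt a then
        Finsupp.single (⟨consF Q a p.1.1, chain_consF Q p.1.2 h⟩, p.2 - 1) 1
      else 0

/-- the action of a generator, as an endomorphism of `M` -/
def endOf (g : LGen Q) : Module.End k (MM k Q) :=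
  Finsupp.lift (MM k Q) k (InfP Q × ℤ) (genAct k Q g)

@[simp] lemma endOf_single (g : LGen Q) (p : InfP Q × ℤ) :
    endOf k Q g (Finsupp.single p 1) = genAct k Q g p := by
  simp [endOf]

lemma end_ext {φ ψ : Module.End k (MM k Q)}
    (h : ∀ p : InfP Q × ℤ, φ (Finsupp.single p 1) = ψ (Finsupp.single p 1)) : φ = ψ := by
  apply Finsupp.lhom_ext
  intro p b
  have hb : (Finsupp.single p b : MM k Q) = b • Finsupp.single p 1 := by
    rw [Finsupp.smul_single, smul_eq_mul, mul_one]
  rw [hb, map_smul, map_smul, h]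

end Aux3

section Aux4
variable (k : Type) [Field k] (Q : QuiverData)

/-- the representation of the free algebra on `M` -/
def freeRho : FreeAlgebra k (LGen Q) →ₐ[k] Module.End k (MM k Q) :=
  FreeAlgebra.lift k (endOf k Q)

@[simp] lemma freeRho_ι (g : LGen Q) : freeRho k Q (FreeAlgebra.ι k g) = endOf k Q g :=
  FreeAlgebra.lift_ι_apply _ _

@[simp] lemma shiftP_consF (a : Q.A) (x : InfP Q) (h : ChainF Q (consF Q a x.1)) :
    shiftP Q ⟨consF Q a x.1, h⟩ = x :=
  Subtype.ext (funext fun _ => rfl)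

lemma src_shiftP (x : InfP Q) : Q.src ((shiftP Q x).1 0) = Q.tgt (x.1 0) := x.2 0

lemma consF_shiftP (x : InfP Q) : consF Q (x.1 0) (shiftP Q x).1 = x.1 := by
  funext n
  cases n with
  | zero => rfl
  | succ n => rfl

lemma rho_rel : ∀ ⦃x y : FreeAlgebra k (LGen Q)⦄, LeavittRel k Q x y →
    freeRho k Q x = freeRho k Q y := by
  intro x y h
  induction h with
  | vertex_mul i j =>
      by_cases hij : i = j
      · subst hij
        rw [if_pos rfl, map_mul]
        apply end_ext
        intro p
        by_cases h : Q.src (p.1.1 0) = i <;>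
          simp [Module.End.mul_apply, genAct, h]
      · rw [if_neg hij, map_zero, map_mul]
        apply end_ext
        intro p
        have hji : ¬ Q.src (p.1.1 0) = j ∨ ¬ Q.src (p.1.1 0) = i := by
          by_cases h1 : Q.src (p.1.1 0) = j
          · right; rw [h1]; exact fun hh => hij hh.symm
          · left; exact h1
        by_cases h : Q.src (p.1.1 0) = j <;>
          by_cases h' : Q.src (p.1.1 0) = i <;>
          simp_all [Module.End.mul_apply, genAct]
  | sum_vertices =>
      rw [map_sum, map_one]
      apply end_ext
      intro p
      simp only [freeRho_ι, LinearMap.sum_apply, endOf_single]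
      rw [show ((1 : Module.End k (MM k Q)) (Finsupp.single p 1)) = Finsupp.single p 1 from rfl]
      have : ∀ i : Q.V, genAct k Q (LGen.vertex i) p =
          if Q.src (p.1.1 0) = i then Finsupp.single p 1 else 0 := fun _ => rfl
      simp only [this]
      rw [Finset.sum_ite_eq]
      simp
  | arrow_tgt a =>
      rw [map_mul]
      apply end_ext
      intro p
      by_cases h : p.1.1 0 = a
      · have hs : Q.src ((shiftP Q p.1).1 0) = Q.tgt a := by rw [src_shiftP, h]
        simp [Module.End.mul_apply, genAct, h, hs]
      · simp [Module.End.mul_apply, genAct, h]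
  | arrow_src a =>
      rw [map_mul]
      apply end_ext
      intro p
      by_cases h : p.1.1 0 = a
      · have hs : Q.src (p.1.1 0) = Q.src a := by rw [h]
        simp [Module.End.mul_apply, genAct, h, hs]
      · by_cases h2 : Q.src (p.1.1 0) = Q.src a <;>
          simp [Module.End.mul_apply, genAct, h, h2]
  | ghost_src a =>
      rw [map_mul]
      apply end_ext
      intro p
      by_cases h : Q.src (p.1.1 0) = Q.tgt a <;>
        simp [Module.End.mul_apply, genAct, h]
  | ghost_tgt a =>
      rw [map_mul]
      apply end_ext
      intro p
      by_cases h : Q.src (p.1.1 0) = Q.tgt a <;>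
        simp [Module.End.mul_apply, genAct, h]
  | ck1 a b hs =>
      by_cases hab : a = b
      · subst hab
        rw [if_pos rfl, map_mul]
        apply end_ext
        intro p
        by_cases h : Q.src (p.1.1 0) = Q.tgt a
        · simp only [freeRho_ι, Module.End.mul_apply, endOf_single]
          rw [show genAct k Q (LGen.ghost a) p =
            Finsupp.single (⟨consF Q a p.1.1, chain_consF Q p.1.2 h⟩, p.2 - 1) 1 from
              by simp [genAct, h]]
          rw [endOf_single]
          rw [show genAct k Q (LGen.arrow a)
              (⟨consF Q a p.1.1, chain_consF Q p.1.2 h⟩, p.2 - 1) =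
            Finsupp.single (p.1, p.2 - 1 + 1) 1 from by simp [genAct]]
          simp [genAct, h]
        · simp [Module.End.mul_apply, genAct, h]
      · rw [if_neg hab, map_zero, map_mul]
        apply end_ext
        intro p
        by_cases h : Q.src (p.1.1 0) = Q.tgt b
        · simp only [freeRho_ι, Module.End.mul_apply, endOf_single]
          rw [show genAct k Q (LGen.ghost b) p =
            Finsupp.single (⟨consF Q b p.1.1, chain_consF Q p.1.2 h⟩, p.2 - 1) 1 from
              by simp [genAct, h]]
          rw [endOf_single]
          have : ¬ (consF Q b p.1.1 0 = a) := fun hh => hab (by simpa using hh.symm)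
          have hba : ¬ b = a := fun hh => hab hh.symm
          simp [genAct, this, hba]
        · simp [Module.End.mul_apply, genAct, h]
  | ck2 v =>
      rw [map_sum]
      apply end_ext
      intro p
      simp only [map_mul, freeRho_ι, LinearMap.sum_apply, Module.End.mul_apply, endOf_single]
      have hterm : ∀ a : Q.A, endOf k Q (LGen.ghost a) (genAct k Q (LGen.arrow a) p) =
          if p.1.1 0 = a then Finsupp.single p 1 else 0 := by
        intro a
        by_cases h : p.1.1 0 = a
        · subst h
          rw [show genAct k Q (LGen.arrow (p.1.1 0)) p =
              Finsupp.single (shiftP Q p.1, p.2 + 1) 1 from by simp [genAct]]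
          rw [endOf_single]
          have hc : Q.src ((shiftP Q p.1).1 0) = Q.tgt (p.1.1 0) := src_shiftP Q p.1
          rw [show genAct k Q (LGen.ghost (p.1.1 0)) (shiftP Q p.1, p.2 + 1) =
            Finsupp.single (⟨consF Q (p.1.1 0) (shiftP Q p.1).1,
              chain_consF Q (shiftP Q p.1).2 hc⟩, p.2 + 1 - 1) 1 from by simp [genAct, hc]]
          rw [if_pos rfl]
          congr 1
          refine Prod.ext ?_ (by omega)
          exact Subtype.ext (consF_shiftP Q p.1)
        · rw [show genAct k Q (LGen.arrow a) p = 0 from by simp [genAct, h], map_zero,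
            if_neg h]
      simp only [hterm]
      rw [Finset.sum_ite_eq]
      simp [genAct, Finset.mem_filter]

/-- the representation of `L(Q)` on `M` -/
def rho : LeavittAlg k Q →ₐ[k] Module.End k (MM k Q) :=
  RingQuot.liftAlgHom k ⟨freeRho k Q, rho_rel k Q⟩

@[simp] lemma rho_lgen (g : LGen Q) : rho k Q (lgen k Q g) = endOf k Q g := by
  rw [lgen, rho]
  rw [RingQuot.liftAlgHom_mkAlgHom_apply]
  exact freeRho_ι k Q g

end Aux4

section Aux5
variable (k : Type) [Field k] (Q : QuiverData)

/-- basis vector of `M` -/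
def vecOf (x : InfP Q) (n : ℤ) : MM k Q := Finsupp.single (x, n) 1

lemma rho_pe {l : List Q.A} {s t : Q.V} (hl : PathOk Q s t l) (f : InfP Q) (n : ℤ) :
    rho k Q (pe k Q l s) (vecOf k Q f n) =
      if Q.src (f.1 0) = s ∧ MatchesP Q l f.1 then
        vecOf k Q (dropP Q l.length f) (n + l.length) else 0 := by
  induction l generalizing t with
  | nil =>
      rw [pe_nil]
      rw [show lvert k Q s = lgen k Q (LGen.vertex s) from rfl, rho_lgen]
      rw [vecOf, endOf_single]
      have h2 : dropP Q 0 f = f := Subtype.ext rfl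
      simp [genAct, vecOf, h2, MatchesP]
  | cons a l ih =>
      rw [pe_cons, map_mul, Module.End.mul_apply, ih hl.2]
      by_cases hm : Q.src (f.1 0) = s ∧ MatchesP Q l f.1
      · rw [if_pos hm]
        rw [show AR k Q a = lgen k Q (LGen.arrow a) from rfl, rho_lgen]
        rw [vecOf, endOf_single]
        have hd : (dropP Q l.length f).1 0 = f.1 l.length := by
          show f.1 (0 + l.length) = f.1 l.length
          rw [Nat.zero_add]
        by_cases hfa : f.1 l.length = a
        · have hgen : genAct k Q (LGen.arrow a) (dropP Q l.length f, n + l.length) =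
              Finsupp.single (shiftP Q (dropP Q l.length f), n + l.length + 1) 1 := by
            simp [genAct, hd, hfa]
          rw [hgen]
          have hsh : shiftP Q (dropP Q l.length f) = dropP Q (a :: l).length f := by
            refine Subtype.ext (funext fun j => ?_)
            show f.1 (j + 1 + l.length) = f.1 (j + (a :: l).length)
            exact congrArg f.1 (by simp only [List.length_cons]; omega)
          rw [if_pos ⟨hm.1, ⟨hm.2, hfa⟩⟩]
          rw [vecOf, hsh]
          congr 1
          refine Prod.ext rfl ?_
          show n + (l.length : ℤ) + 1 = n + ((a :: l).length : ℤ)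
          simp [List.length_cons]
          ring
        · have hgen : genAct k Q (LGen.arrow a) (dropP Q l.length f, n + l.length) = 0 := by
            simp [genAct, hd, hfa]
          rw [hgen]
          rw [if_neg (by
            rintro ⟨h1, h2, h3⟩
            exact hfa h3)]
      · rw [if_neg hm, map_zero, if_neg (by
          rintro ⟨h1, h2, h3⟩
          exact hm ⟨h1, h2⟩)]

lemma rho_ge : ∀ {l : List Q.A} {s t : Q.V}, PathOk Q s t l → ∀ (f : InfP Q),
    Q.src (f.1 0) = t → ∀ (n : ℤ),
    rho k Q (ge k Q l s) (vecOf k Q f n) =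
      vecOf k Q (prependP Q l f) (n - l.length) := by
  intro l
  induction l with
  | nil =>
      intro s t hl f hf n
      rw [ge_nil]
      rw [show lvert k Q s = lgen k Q (LGen.vertex s) from rfl, rho_lgen]
      rw [vecOf, endOf_single]
      have hs : Q.src (f.1 0) = s := by rw [hf]; exact (hl : s = t).symm
      have hp : prependP Q [] f = f := by
        refine Subtype.ext ?_
        rw [prependP_val (Q := Q) (hl : PathOk Q s t []) hf]
        rfl
      simp [genAct, hs, vecOf, hp]
  | cons a l ih =>
      intro s t hl f hf n
      rw [ge_cons, map_mul, Module.End.mul_apply]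
      rw [show GH k Q a = lgen k Q (LGen.ghost a) from rfl, rho_lgen]
      rw [vecOf, endOf_single]
      have hc : Q.src (f.1 0) = Q.tgt a := hf.trans hl.1.symm
      have hgen : genAct k Q (LGen.ghost a) (f, n) =
          Finsupp.single ((⟨consF Q a f.1, chain_consF Q f.2 hc⟩ : InfP Q), n - 1) 1 := by
        simp [genAct, hc]
        rfl
      rw [hgen]
      have := ih hl.2 ⟨consF Q a f.1, chain_consF Q f.2 hc⟩ rfl (n - 1)
      simp only [vecOf] at this
      refine this.trans ?_
      have hval : prependP Q l (⟨consF Q a f.1, chain_consF Q f.2 hc⟩ : InfP Q) =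
          prependP Q (a :: l) f := by
        refine Subtype.ext ?_
        exact (prependP_val (Q := Q) (x := ⟨consF Q a f.1, chain_consF Q f.2 hc⟩) hl.2
          rfl).trans (prependP_val (Q := Q) hl hf).symm
      rw [hval, vecOf]
      congr 1
      refine Prod.ext rfl ?_
      show n - 1 - (l.length : ℤ) = n - ((a :: l).length : ℤ)
      simp [List.length_cons]
      ring

/-- the canonical infinite path out of a vertex, given by no-sinks choices -/
def canonF (hQ : Q.NoSinks) (v : Q.V) : ℕ → Q.A :=
  fun n => Nat.rec (hQ v).choose (fun _ a => (hQ (Q.tgt a)).choose) n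

lemma chain_canonF (hQ : Q.NoSinks) (v : Q.V) : ChainF Q (canonF Q hQ v) := by
  intro n
  exact (hQ (Q.tgt (canonF Q hQ v n))).choose_spec

/-- the canonical infinite path as an element of `InfP` -/
def canonP (hQ : Q.NoSinks) (v : Q.V) : InfP Q := ⟨canonF Q hQ v, chain_canonF Q hQ v⟩

lemma canonP_start (hQ : Q.NoSinks) (v : Q.V) :
    Q.src ((canonP Q hQ v).1 0) = v := (hQ v).choose_spec

/-- evaluation of the representation at a fixed vector, as a linear map -/
def evalVec (v : MM k Q) : LeavittAlg k Q →ₗ[k] MM k Q where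
  toFun u := rho k Q u v
  map_add' u w := by simp only [map_add, LinearMap.add_apply]
  map_smul' c u := by simp only [map_smul, LinearMap.smul_apply, RingHom.id_apply]

@[simp] lemma evalVec_apply (v : MM k Q) (u : LeavittAlg k Q) :
    evalVec k Q v u = rho k Q u v := rfl

end Aux5

section Aux6
variable (k : Type) [Field k] (Q : QuiverData)

lemma qpath_ext {p q : QPath Q} (hs : p.source = q.source) (ha : p.arrows = q.arrows) :
    p = q := by
  obtain ⟨ps, pt, pa, pok⟩ := p
  obtain ⟨qs, qt, qa, qok⟩ := q
  simp only at hs ha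
  subst hs; subst ha
  obtain rfl : pt = qt := pathok_tgt_unique Q pok qok
  rfl

lemma leavitt_lin_indep (hQ : Q.NoSinks) (i : Q.V) (m : ℕ) :
    LinearIndependent k
      (fun pq : GEPairs Q i m => ghostElem k Q pq.1.1 * pathElem k Q pq.1.2) := by
  rw [linearIndependent_iff]
  intro l hl
  ext pq0
  obtain ⟨ht0, hsγ0, hsη0, hlen0⟩ := pq0.2
  set γ0 := pq0.1.1 with hγ0def
  set η0 := pq0.1.2 with hη0def
  set x0 : InfP Q := canonP Q hQ η0.target with hx0def
  have hx0 : Q.src (x0.1 0) = η0.target := canonP_start Q hQ _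
  set X0 : InfP Q := prependP Q η0.arrows x0 with hX0def
  have hX0val : X0.1 = prependF Q η0.arrows x0.1 := prependP_val (Q := Q) η0.ok hx0
  have hX0start : Q.src (X0.1 0) = i := by
    rw [hX0val, prependF_start Q _ η0.ok hx0]
    exact hsη0
  set P0 : InfP Q × ℤ := (prependP Q γ0.arrows x0, (m : ℤ) - γ0.arrows.length) with hP0def
  set φ : LeavittAlg k Q →ₗ[k] k :=
    (Finsupp.lapply P0).comp (evalVec k Q (vecOf k Q X0 0)) with hφdef
  have key : ∀ pq : GEPairs Q i m,
      φ (ghostElem k Q pq.1.1 * pathElem k Q pq.1.2) = if pq = pq0 then 1 else 0 := by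
    intro pq
    obtain ⟨ht, hsγ, hsη, hlen⟩ := pq.2
    have hφap : φ (ghostElem k Q pq.1.1 * pathElem k Q pq.1.2) =
        (rho k Q (ge k Q pq.1.1.arrows pq.1.1.source)
          (rho k Q (pe k Q pq.1.2.arrows pq.1.2.source) (vecOf k Q X0 0))) P0 := by
      rw [hφdef]
      simp only [LinearMap.comp_apply, evalVec_apply, Finsupp.lapply_apply]
      rw [ghostElem_eq, pathElem_eq, map_mul, Module.End.mul_apply]
    have hm0 : MatchesP Q η0.arrows X0.1 := by
      rw [hX0val]; exact matchesP_prependF Q _ _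
    by_cases hη : pq.1.2 = η0
    · -- the path part matches
      have hcond : Q.src (X0.1 0) = pq.1.2.source ∧ MatchesP Q pq.1.2.arrows X0.1 := by
        refine ⟨by rw [hX0start, hsη], ?_⟩
        rw [hη]; exact hm0
      rw [hφap, rho_pe k Q pq.1.2.ok X0 0, if_pos hcond]
      have hdrop : dropP Q pq.1.2.arrows.length X0 = x0 := by
        refine Subtype.ext ?_
        show dropF Q pq.1.2.arrows.length X0.1 = x0.1
        rw [hX0val, hη]
        exact dropF_prependF Q η0.arrows x0.1
      rw [hdrop]
      have hsx0γ : Q.src (x0.1 0) = pq.1.1.target := by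
        rw [hx0, ht, hη]
      rw [rho_ge k Q pq.1.1.ok x0 hsx0γ _]
      rw [vecOf, Finsupp.single_apply]
      have hiff : ((prependP Q pq.1.1.arrows x0,
          (0 : ℤ) + pq.1.2.arrows.length - pq.1.1.arrows.length) = P0) ↔ pq = pq0 := by
        constructor
        · intro hpair
          have h1 := congrArg Prod.fst hpair
          have h2 := congrArg Prod.snd hpair
          simp only [hP0def] at h1 h2
          have hlenγ : pq.1.1.arrows.length = γ0.arrows.length := by
            rw [hlen] at h2
            omega
          have hval : prependF Q pq.1.1.arrows x0.1 = prependF Q γ0.arrows x0.1 := by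
            have e1 := prependP_val (Q := Q) pq.1.1.ok hsx0γ
            have e2 := prependP_val (Q := Q) γ0.ok (by rw [hx0, ht0] : Q.src (x0.1 0) = γ0.target)
            rw [← e1, ← e2, h1]
          have harr : pq.1.1.arrows = γ0.arrows := by
            refine matchesP_unique Q _ _ (prependF Q pq.1.1.arrows x0.1) ?_ ?_ hlenγ
            · exact matchesP_prependF Q _ _
            · rw [hval]; exact matchesP_prependF Q _ _
          have hγ : pq.1.1 = γ0 := qpath_ext Q (hsγ.trans hsγ0.symm) harr
          exact Subtype.ext (Prod.ext hγ hη)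
        · intro hpq
          subst hpq
          refine Prod.ext ?_ ?_
          · rfl
          · show (0 : ℤ) + pq.1.2.arrows.length - pq.1.1.arrows.length =
              (m : ℤ) - pq.1.1.arrows.length
            rw [hlen]
            ring
      rw [if_congr hiff rfl rfl]
    · -- the path part does not match
      have hcond : ¬ (Q.src (X0.1 0) = pq.1.2.source ∧ MatchesP Q pq.1.2.arrows X0.1) := by
        rintro ⟨-, hm⟩
        have harr : pq.1.2.arrows = η0.arrows :=
          matchesP_unique Q _ _ X0.1 hm hm0 (hlen.trans hlen0.symm)
        exact hη (qpath_ext Q (hsη.trans hsη0.symm) harr)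
      rw [hφap, rho_pe k Q pq.1.2.ok X0 0, if_neg hcond, map_zero]
      rw [if_neg (fun hpq => hη (by rw [hpq]))]
      rfl
  have h2 := congrArg φ hl
  rw [map_zero, Finsupp.linearCombination_apply, map_finsuppSum] at h2
  simp only [map_smul, smul_eq_mul, key] at h2
  have h3 : (l.sum fun pq a => a * if pq = pq0 then (1 : k) else 0) =
      l.sum fun pq a => if pq = pq0 then a else 0 := by
    refine Finsupp.sum_congr fun pq _ => ?_
    split_ifs <;> simp
  rw [h3, Finsupp.sum_ite_eq'] at h2
  by_cases hs : pq0 ∈ l.support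
  · rw [if_pos hs] at h2
    simpa using h2
  · have := Finsupp.notMem_support_iff.mp hs
    simpa using this

end Aux6

section Aux7
variable (k : Type) [Field k] (Q : QuiverData)

lemma ck2_expand (γ η : QPath Q) (h : γ.target = η.target) :
    ghostElem k Q γ * pathElem k Q η =
      ∑ a ∈ (Finset.univ.filter (fun a => Q.src a = η.target)).attach,
        ghostElem k Q (γ.cons Q a.1
            (by rw [(Finset.mem_filter.mp a.2).2]; exact h.symm)) *
          pathElem k Q (η.cons Q a.1 ((Finset.mem_filter.mp a.2).2)) := by
  have h1 : PathOk Q γ.source η.target γ.arrows := h ▸ γ.ok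
  calc ghostElem k Q γ * pathElem k Q η
      = ge k Q γ.arrows γ.source * lvert k Q η.target * pe k Q η.arrows η.source := by
        rw [ghostElem_eq, pathElem_eq, ge_vert k Q h1]
    _ = ∑ a ∈ Finset.univ.filter (fun a => Q.src a = η.target),
          ge k Q γ.arrows γ.source * (GH k Q a * AR k Q a) * pe k Q η.arrows η.source := by
        rw [← ck2' k Q η.target, Finset.mul_sum, Finset.sum_mul]
    _ = ∑ a ∈ Finset.univ.filter (fun a => Q.src a = η.target),
          ge k Q (a :: γ.arrows) γ.source * pe k Q (a :: η.arrows) η.source :=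
        Finset.sum_congr rfl fun a _ => by simp only [ge_cons, pe_cons, mul_assoc]
    _ = ∑ a ∈ (Finset.univ.filter (fun a => Q.src a = η.target)).attach,
          ge k Q (a.1 :: γ.arrows) γ.source * pe k Q (a.1 :: η.arrows) η.source :=
        (Finset.sum_attach _ _).symm
    _ = _ := Finset.sum_congr rfl fun a _ => rfl

lemma xim_mono (i : Q.V) (m : ℕ) : Xim k Q i m ≤ Xim k Q i (m + 1) := by
  rw [Xim, Submodule.span_le]
  rintro x ⟨pq, rfl⟩
  obtain ⟨ht, hsγ, hsη, hlen⟩ := pq.2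
  show ghostElem k Q pq.1.1 * pathElem k Q pq.1.2 ∈ Xim k Q i (m + 1)
  rw [ck2_expand k Q pq.1.1 pq.1.2 ht]
  apply Submodule.sum_mem
  intro a _
  apply Submodule.subset_span
  refine ⟨⟨(pq.1.1.cons Q a.1 (by rw [(Finset.mem_filter.mp a.2).2]; exact ht.symm),
      pq.1.2.cons Q a.1 ((Finset.mem_filter.mp a.2).2)), rfl, hsγ, hsη, ?_⟩, rfl⟩
  show (a.1 :: pq.1.2.arrows).length = m + 1
  rw [List.length_cons, hlen]

/-- the spanning set of `L(Q)`: elements `γ* η` with `t(γ) = t(η)` -/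
def GSet : Set (LeavittAlg k Q) :=
  {x | ∃ γ η : QPath Q, γ.target = η.target ∧ x = ghostElem k Q γ * pathElem k Q η}

lemma one_mem_spanG : (1 : LeavittAlg k Q) ∈ Submodule.span k (GSet k Q) := by
  rw [← sum_vert k Q]
  apply Submodule.sum_mem
  intro v _
  apply Submodule.subset_span
  refine ⟨⟨v, v, [], rfl⟩, ⟨v, v, [], rfl⟩, rfl, ?_⟩
  rw [ghostElem_eq, pathElem_eq]
  show lvert k Q v = ge k Q [] v * pe k Q [] v
  rw [ge_nil, pe_nil, vert_mul, if_pos rfl]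

lemma gen_mul_mem (g : LGen Q) (x : LeavittAlg k Q) (hx : x ∈ GSet k Q) :
    lgen k Q g * x ∈ Submodule.span k (GSet k Q) := by
  obtain ⟨γ, η, ht, rfl⟩ := hx
  cases g with
  | vertex v =>
      rw [ghostElem_eq, pathElem_eq, ← mul_assoc,
        show lgen k Q (LGen.vertex v) = lvert k Q v from rfl, vert_ge]
      split_ifs with hcase
      · exact Submodule.subset_span ⟨γ, η, ht, by rw [ghostElem_eq, pathElem_eq]⟩
      · rw [zero_mul]; exact zero_mem _
  | ghost a =>
      rw [ghostElem_eq, pathElem_eq, ← mul_assoc,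
        show lgen k Q (LGen.ghost a) = GH k Q a from rfl, gh_mul_ge]
      split_ifs with hcase
      · apply Submodule.subset_span
        exact ⟨⟨Q.src a, γ.target, γ.arrows ++ [a],
          (pathok_concat Q).mpr ⟨rfl, hcase ▸ γ.ok⟩⟩, η, ht, rfl⟩
      · rw [zero_mul]; exact zero_mem _
  | arrow a =>
      rcases List.eq_nil_or_concat γ.arrows with hnil | ⟨l₀, b, hcat⟩
      · have hst : γ.source = γ.target := by have h0 := γ.ok; rw [hnil] at h0; exact h0
        rw [ghostElem_eq, pathElem_eq, hnil, ge_nil, ← mul_assoc,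
          show lgen k Q (LGen.arrow a) = AR k Q a from rfl, arrow_vert]
        split_ifs with hcase
        · have hsa : Q.src a = η.target := by rw [hcase, hst, ht]
          have hok : PathOk Q η.source (Q.tgt a) (a :: η.arrows) := ⟨rfl, hsa ▸ η.ok⟩
          apply Submodule.subset_span
          refine ⟨⟨Q.tgt a, Q.tgt a, [], rfl⟩, ⟨η.source, Q.tgt a, a :: η.arrows, hok⟩, rfl, ?_⟩
          have hval : ge k Q [] (Q.tgt a) * pe k Q (a :: η.arrows) η.source =
              AR k Q a * pe k Q η.arrows η.source := by
            rw [ge_nil, vert_pe k Q hok, pe_cons]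
          rw [ghostElem_eq, pathElem_eq]
          exact hval.symm
        · rw [zero_mul]; exact zero_mem _
      · rw [List.concat_eq_append] at hcat
        have hsb : γ.source = Q.src b ∧ PathOk Q (Q.tgt b) γ.target l₀ := by
          have h0 := γ.ok; rw [hcat] at h0; exact (pathok_concat Q).mp h0
        rw [ghostElem_eq, pathElem_eq, hcat, hsb.1, ← mul_assoc,
          show lgen k Q (LGen.arrow a) = AR k Q a from rfl, ar_mul_ge_concat]
        split_ifs with hcase
        · apply Submodule.subset_span
          exact ⟨⟨Q.tgt b, γ.target, l₀, hsb.2⟩, η, ht, rfl⟩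
        · rw [zero_mul]; exact zero_mem _

lemma spanG_top : Submodule.span k (GSet k Q) = ⊤ := by
  rw [eq_top_iff]
  rintro u -
  have hadj : u ∈ Algebra.adjoin k (Set.range (lgen k Q)) := by
    have h2 : Set.range (lgen k Q) = ⇑(leavittMk k Q) '' Set.range (FreeAlgebra.ι k) := by
      rw [← Set.range_comp]; rfl
    have h1 : Algebra.adjoin k (Set.range (lgen k Q)) = ⊤ := by
      rw [h2, ← AlgHom.map_adjoin, FreeAlgebra.adjoin_range_ι, Algebra.map_top]
      rw [AlgHom.range_eq_top]
      exact RingQuot.mkAlgHom_surjective k _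
    rw [h1]; trivial
  have key : ∀ u ∈ Algebra.adjoin k (Set.range (lgen k Q)),
      ∀ y ∈ Submodule.span k (GSet k Q), u * y ∈ Submodule.span k (GSet k Q) := by
    intro u hu
    induction hu using Algebra.adjoin_induction with
    | mem g hg =>
        obtain ⟨g0, rfl⟩ := hg
        intro y hy
        induction hy using Submodule.span_induction with
        | mem x hx => exact gen_mul_mem k Q g0 x hx
        | zero => rw [mul_zero]; exact zero_mem _
        | add x y _ _ hx hy => rw [mul_add]; exact add_mem hx hy
        | smul c x _ hx => rw [mul_smul_comm]; exact Submodule.smul_mem _ _ hx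
    | algebraMap r =>
        intro y hy
        rw [← Algebra.smul_def]
        exact Submodule.smul_mem _ _ hy
    | add u v hu hv hu' hv' =>
        intro y hy
        rw [add_mul]
        exact add_mem (hu' y hy) (hv' y hy)
    | mul u v hu hv hu' hv' =>
        intro y hy
        rw [mul_assoc]
        exact hu' _ (hv' y hy)
  have h1 := key u hadj 1 (one_mem_spanG k Q)
  rwa [mul_one] at h1

lemma cornerMap_apply (i : Q.V) (x : LeavittAlg k Q) :
    cornerMap k Q i x = lvert k Q i * (x * lvert k Q i) := rfl

lemma corner_range (i : Q.V) :
    LinearMap.range (cornerMap k Q i) = ⨆ m' : ℕ, Xim k Q i m' := by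
  apply le_antisymm
  · rw [LinearMap.range_eq_map, ← spanG_top k Q, Submodule.map_span, Submodule.span_le]
    rintro _ ⟨x, ⟨γ, η, ht, rfl⟩, rfl⟩
    rw [SetLike.mem_coe, cornerMap_apply, ghostElem_eq, pathElem_eq, mul_assoc, pe_vert]
    split_ifs with h1
    · rw [← mul_assoc, vert_ge]
      split_ifs with h2
      · refine Submodule.mem_iSup_of_mem η.arrows.length ?_
        apply Submodule.subset_span
        exact ⟨⟨(γ, η), ht, h2.symm, h1, rfl⟩, rfl⟩
      · rw [zero_mul]; exact zero_mem _
    · rw [mul_zero, mul_zero]; exact zero_mem _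
  · refine iSup_le fun m' => ?_
    rw [Xim, Submodule.span_le]
    rintro _ ⟨pq, rfl⟩
    obtain ⟨ht, hsγ, hsη, hlen⟩ := pq.2
    refine ⟨ghostElem k Q pq.1.1 * pathElem k Q pq.1.2, ?_⟩
    show cornerMap k Q i (ghostElem k Q pq.1.1 * pathElem k Q pq.1.2) =
      ghostElem k Q pq.1.1 * pathElem k Q pq.1.2
    rw [cornerMap_apply, ghostElem_eq, pathElem_eq, mul_assoc, pe_vert, if_pos hsη,
      ← mul_assoc, vert_ge, if_pos hsγ.symm]

end Aux7

/-- **Lemma 4.1 of Chen–Li–Wang.**  Let `Q` be a finite quiver without sinks over a field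
`k` and `L = L(Q)` the Leavitt path algebra.  For every vertex `i ∈ Q₀` and every `m ≥ 0`:
(1) the set `{γ*η : γ, η paths with t(γ) = t(η), s(γ) = s(η) = i, ℓ(η) = m}` is
`k`-linearly independent in `L`;
(2) `X_{i,m} ⊆ X_{i,m+1}` (via the second Cuntz–Krieger relations
`γ*η = Σ_{α ∈ Q₁, s(α) = t(η)} (αγ)*(αη)`), and `e_i L e_i = ⋃_{m ≥ 0} X_{i,m}`. -/
theorem leavitt_corner_filtration (k : Type) [Field k] (Q : QuiverData) (hQ : Q.NoSinks)
    (i : Q.V) (m : ℕ) :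
    LinearIndependent k
      (fun pq : GEPairs Q i m => ghostElem k Q pq.1.1 * pathElem k Q pq.1.2) ∧
    (∀ (γ η : QPath Q) (h : γ.target = η.target),
      ghostElem k Q γ * pathElem k Q η =
        ∑ a ∈ (Finset.univ.filter (fun a => Q.src a = η.target)).attach,
          ghostElem k Q (γ.cons Q a.1
              (by rw [(Finset.mem_filter.mp a.2).2]; exact h.symm)) *
            pathElem k Q (η.cons Q a.1 ((Finset.mem_filter.mp a.2).2))) ∧
    Xim k Q i m ≤ Xim k Q i (m + 1) ∧
    LinearMap.range (cornerMap k Q i) = ⨆ m' : ℕ, Xim k Q i m' := by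
  exact ⟨leavitt_lin_indep k Q hQ i m, fun γ η h => ck2_expand k Q γ η h,
    xim_mono k Q i m, corner_range k Q i⟩
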